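/- Let v_1, v_2, v_3, v_4 ∈ ℤ^d lie in a common 2-dimensional affine subspace, suppose each v_i is an extreme point of Q = conv{v_1, v_2, v_3, v_4}, and suppose v_1, v_2, v_3, v_4 is a cyclic vertex order of Q (the edges of Q are [v_1,v_2], [v_2,v_3], [v_3,v_4], [v_4,v_1]). If no edge of Q is parallel to its opposite edge (v_2 − v_1 is not a real scalar multiple of v_4 − v_3, and v_3 − v_2 is not a real scalar multiple of v_1 − v_4), then the relative interior of Q contains a point w ∈ ℤ^d with w ∉ {v_1, v_2, v_3, v_4}; moreover, w can be chosen to lie in the relative interior of the convex hull of some three of the points v_1, v_2, v_3, v_4. -/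

import Mathlib

open MeasureTheory Set
open scoped ENNReal

noncomputable section

section helpers
open Set AffineSubspace Module

lemma lemB {d : ℕ} {s t : Set (Fin d → ℝ)} (hst : s ⊆ t)
    (h : affineSpan ℝ s = affineSpan ℝ t) :
    intrinsicInterior ℝ s ⊆ intrinsicInterior ℝ t := by
  unfold intrinsicInterior
  rw [← h]
  exact Set.image_mono (interior_mono (Set.preimage_mono hst))


attribute [local instance] AffineSubspace.toNormedAddTorsor

lemma lemA {d : ℕ} (p : Fin 3 → (Fin d → ℝ)) (hp : AffineIndependent ℝ p)
    (ω : Fin 3 → ℝ) (hω : ∀ i, 0 < ω i) (hsum : ∑ i, ω i = 1) :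
    ∑ i, ω i • p i ∈ intrinsicInterior ℝ (convexHull ℝ (Set.range p)) := by
  classical
  set P := affineSpan ℝ (Set.range p) with hP
  have hmem : ∀ i, p i ∈ P := fun i => subset_affineSpan ℝ _ (mem_range_self i)
  haveI : Nonempty ↥P := ⟨⟨p 0, hmem 0⟩⟩
  set q : Fin 3 → ↥P := fun i => ⟨p i, hmem i⟩ with hq
  set e := AffineIsometryEquiv.vaddConst ℝ (⟨p 0, hmem 0⟩ : ↥P) with he
  set r : Fin 3 → ↥P.direction := fun i => e.symm (q i) with hr
  set f : ↥P.direction →ᵃ[ℝ] (Fin d → ℝ) := P.subtype.comp e.toAffineEquiv.toAffineMap with hf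
  have hfco : ⇑f = (↑) ∘ ⇑e := rfl
  have hfr : ∀ i, f (r i) = p i := by
    intro i; simp [hf, hr, hq]
  have hfr' : ⇑f ∘ r = p := funext hfr
  have hrind : AffineIndependent ℝ r := AffineIndependent.of_comp f (by rw [hfr']; exact hp)
  haveI : Nonempty ↥(Set.range p) := ⟨⟨p 0, mem_range_self 0⟩⟩
  have hpre : ((↑) ⁻¹' Set.range p : Set ↥P) = Set.range q := by
    ext x
    constructor
    · rintro ⟨i, hi⟩
      exact ⟨i, Subtype.ext hi⟩
    · rintro ⟨i, rfl⟩
      exact ⟨i, rfl⟩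
  have hqtot : affineSpan ℝ (Set.range q) = ⊤ := by
    rw [← hpre]
    exact affineSpan_coe_preimage_eq_top _
  have hrtot : affineSpan ℝ (Set.range r) = ⊤ := by
    have h1 : Set.range r = ⇑e.symm.toAffineEquiv.toAffineMap '' Set.range q := by
      have h2 : r = ⇑e.symm.toAffineEquiv.toAffineMap ∘ q := rfl
      rw [h2, Set.range_comp]
    rw [h1]
    exact AffineMap.span_eq_top_of_surjective _ e.symm.toAffineEquiv.surjective hqtot
  set b : AffineBasis (Fin 3) ℝ ↥P.direction := ⟨r, hrind, hrtot⟩ with hb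
  set Wd : ↥P.direction := Finset.univ.affineCombination ℝ r ω with hWd
  have hcoord : ∀ i, b.coord i Wd = ω i := by
    intro i
    rw [hWd]
    exact AffineBasis.coord_apply_combination_of_mem _ (Finset.mem_univ i) hsum
  have hWdint : Wd ∈ interior (convexHull ℝ (Set.range r)) := by
    have h3 : Set.range ⇑b = Set.range r := rfl
    rw [← h3, b.interior_convexHull]
    intro i
    rw [hcoord i]
    exact hω i
  have hfW : f Wd = ∑ i, ω i • p i := by
    rw [hWd, Finset.map_affineCombination _ _ _ hsum f, hfr',
      Finset.univ.affineCombination_eq_linear_combination p ω hsum]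
  have hinj : Function.Injective ⇑f := by
    rw [hfco]
    exact Subtype.coe_injective.comp e.injective
  have hhull : ⇑f ⁻¹' (convexHull ℝ (Set.range p)) = convexHull ℝ (Set.range r) := by
    have himg : ⇑f '' convexHull ℝ (Set.range r) = convexHull ℝ (Set.range p) := by
      rw [AffineMap.image_convexHull, ← Set.range_comp, hfr']
    rw [← himg, Set.preimage_image_eq _ hinj]
  -- now the intrinsic interior
  rw [← hfW]
  unfold intrinsicInterior
  rw [affineSpan_convexHull]
  refine ⟨e Wd, ?_, rfl⟩
  have hYpre : ((↑) ⁻¹' (convexHull ℝ (Set.range p)) : Set ↥P) = ⇑e '' (convexHull ℝ (Set.range r)) := by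
    rw [← hhull, hfco]
    ext x
    constructor
    · intro hx
      exact ⟨e.symm x, by simpa using hx, by simp⟩
    · rintro ⟨y, hy, rfl⟩
      simpa using hy
  rw [hYpre]
  have h4 : (⇑e '' convexHull ℝ (Set.range r)) = ⇑e.toHomeomorph '' convexHull ℝ (Set.range r) := rfl
  rw [h4, ← e.toHomeomorph.image_interior]
  exact ⟨Wd, hWdint, rfl⟩



lemma lemC {d : ℕ} {s t : Set (Fin d → ℝ)} (hsub : s ⊆ t) (hne : s.Nonempty)
    (hd : finrank ℝ (vectorSpan ℝ t) ≤ finrank ℝ (vectorSpan ℝ s)) :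
    affineSpan ℝ s = affineSpan ℝ t := by
  have hdir : (affineSpan ℝ s).direction = (affineSpan ℝ t).direction := by
    rw [direction_affineSpan, direction_affineSpan]
    exact Submodule.eq_of_le_of_finrank_le (vectorSpan_mono ℝ hsub) hd
  obtain ⟨x, hx⟩ := hne
  exact AffineSubspace.ext_of_direction_eq hdir
    ⟨x, mem_affineSpan ℝ hx, mem_affineSpan ℝ (hsub hx)⟩

lemma lemE {d : ℕ} (A : Set (Fin d → ℝ)) (hA : Convex ℝ A) {x : Fin d → ℝ}
    (hx : x ∈ Set.extremePoints ℝ A)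
    (T : Fin 3 → (Fin d → ℝ)) (hT : ∀ k, T k ∈ A) (ω : Fin 3 → ℝ) (hω : ∀ k, 0 < ω k)
    (hsum : ∑ k, ω k = 1) (hxc : x = ∑ k, ω k • T k) : T 0 = x := by
  have hs3 : ω 0 + ω 1 + ω 2 = 1 := by rw [← hsum]; simp [Fin.sum_univ_three]
  have h0 : ω 0 < 1 := by nlinarith [hω 1, hω 2]
  have h10 : (0:ℝ) < 1 - ω 0 := by linarith
  set y := (ω 1 / (1 - ω 0)) • T 1 + (ω 2 / (1 - ω 0)) • T 2 with hy
  have hymem : y ∈ A := hA (hT 1) (hT 2) (div_nonneg (hω 1).le h10.le) (div_nonneg (hω 2).le h10.le)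
    (by field_simp; linarith)
  have hseg : x ∈ openSegment ℝ (T 0) y := by
    refine ⟨ω 0, 1 - ω 0, hω 0, h10, by ring, ?_⟩
    rw [hxc, hy, Fin.sum_univ_three]
    match_scalars <;> field_simp
  exact ((mem_extremePoints.mp hx).2 (T 0) (hT 0) y hymem hseg).1

lemma lemD {d : ℕ} {u1 u2 : Fin d → ℝ}
    (hpair : ∀ x y : ℝ, x • u1 + y • u2 = 0 → x = 0 ∧ y = 0)
    (P0 P1 P2 : Fin d → ℝ) (α β γ δ : ℝ) (h1 : P1 - P0 = α • u1 + β • u2)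
    (h2 : P2 - P0 = γ • u1 + δ • u2) (hdet : α * δ - β * γ ≠ 0) :
    AffineIndependent ℝ ![P0, P1, P2] := by
  rw [affineIndependent_iff_of_fintype]
  intro w hw hcomb
  rw [Finset.weightedVSub_eq_linear_combination _ hw] at hcomb
  rw [Fin.sum_univ_three] at hw hcomb
  simp only [Matrix.cons_val_zero, Matrix.cons_val_one, Matrix.head_cons,
    Matrix.cons_val_two, Matrix.tail_cons] at hcomb
  have hrw : (w 1 * α + w 2 * γ) • u1 + (w 1 * β + w 2 * δ) • u2 = 0 := by
    have hw0 : w 0 = - w 1 - w 2 := by linarith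
    calc (w 1 * α + w 2 * γ) • u1 + (w 1 * β + w 2 * δ) • u2
        = w 1 • (α • u1 + β • u2) + w 2 • (γ • u1 + δ • u2) := by module
      _ = w 1 • (P1 - P0) + w 2 • (P2 - P0) := by rw [h1, h2]
      _ = w 0 • P0 + w 1 • P1 + w 2 • P2 := by rw [hw0]; module
      _ = 0 := hcomb
  obtain ⟨e1, e2⟩ := hpair _ _ hrw
  have hw1 : w 1 = 0 := by
    have := mul_eq_zero.mp (show w 1 * (α * δ - β * γ) = 0 by linear_combination δ * e1 - γ * e2)
    tauto
  have hw2 : w 2 = 0 := by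
    have := mul_eq_zero.mp (show w 2 * (α * δ - β * γ) = 0 by linear_combination α * e2 - β * e1)
    tauto
  intro i
  fin_cases i <;> simp [hw1, hw2] <;> linarith

end helpers

set_option maxHeartbeats 1000000
open AffineSubspace Module


/-- A point of `ℝ^d` is a lattice point if all its coordinates are integers. -/
def IsLatticePt (d : ℕ) (x : Fin d → ℝ) : Prop := ∀ i, ∃ z : ℤ, x i = (z : ℝ)

/-- A lattice `d`-simplex: the convex hull of `d+1` affinely independent points of `ℤ^d`. -/
def IsLatticeSimplex (d : ℕ) (T : Set (Fin d → ℝ)) : Prop :=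
  ∃ v : Fin (d + 1) → Fin d → ℤ,
    AffineIndependent ℝ (fun i => fun j => ((v i j : ℤ) : ℝ)) ∧
    T = convexHull ℝ (Set.range (fun i => fun j => ((v i j : ℤ) : ℝ)))

/-- A lattice `d`-polytope: convex hull of a finite set of lattice points affinely
spanning `ℝ^d`. -/
def IsLatticePolytope (d : ℕ) (P : Set (Fin d → ℝ)) : Prop :=
  ∃ F : Finset (Fin d → ℤ),
    affineSpan ℝ ((fun v : Fin d → ℤ => fun j : Fin d => (v j : ℝ)) '' ↑F) = ⊤ ∧
    P = convexHull ℝ ((fun v : Fin d → ℤ => fun j : Fin d => (v j : ℝ)) '' ↑F)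

/-- Clean: the only lattice points on the boundary are the vertices (extreme points). -/
def IsClean (d : ℕ) (P : Set (Fin d → ℝ)) : Prop :=
  frontier P ∩ {x | IsLatticePt d x} = Set.extremePoints ℝ P

/-- Unimodular equivalence of subsets of `ℝ^d`. -/
def UnimodEquiv (d : ℕ) (P Q : Set (Fin d → ℝ)) : Prop :=
  ∃ (M : Matrix (Fin d) (Fin d) ℤ) (u : Fin d → ℤ),
    (M.det = 1 ∨ M.det = -1) ∧
    (fun x => (M.map (fun z : ℤ => (z : ℝ))).mulVec x + (fun i => (u i : ℝ))) '' P = Q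

/-- `S_d(k) = conv(e_1, …, e_d, -k(e_1 + ⋯ + e_d))`. -/
def Sdk (d k : ℕ) : Set (Fin d → ℝ) :=
  convexHull ℝ
    ((Set.range fun i : Fin d => (Pi.single i 1 : Fin d → ℝ)) ∪ {fun _ => -(k : ℝ)})

/-- `T_{a_1,…,a_d}`: vertex set `{0, e_1, …, e_{d-1}, (a_1,…,a_d)}`. -/
def Ta (d : ℕ) (a : Fin d → ℤ) : Set (Fin d → ℝ) :=
  convexHull ℝ
    ({(0 : Fin d → ℝ)} ∪
      {x | ∃ i : Fin d, i.val < d - 1 ∧ x = (Pi.single i 1 : Fin d → ℝ)} ∪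
      {fun i => (a i : ℝ)})

/-- A planar lattice quadrilateral (vertices `V 0, V 1, V 2, V 3` in cyclic
order, encoded by the crossing of the diagonals) with no pair of parallel opposite edges
contains a lattice point in its relative interior other than its vertices; moreover such
a point can be found in the relative interior of the convex hull of three of the
vertices. -/
theorem quadrilateral_has_interior_lattice_point (d : ℕ) (v : Fin 4 → Fin d → ℤ)
    (V : Fin 4 → Fin d → ℝ) (hV : ∀ i j, V i j = (v i j : ℝ))
    (hVinj : Function.Injective V)
    (hcop : Coplanar ℝ (Set.range V))
    (hext : ∀ i, V i ∈ Set.extremePoints ℝ (convexHull ℝ (Set.range V)))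
    (hcyc : (segment ℝ (V 0) (V 2) ∩ segment ℝ (V 1) (V 3)).Nonempty)
    (hpar1 : ¬ ∃ c : ℝ, V 1 - V 0 = c • (V 3 - V 2))
    (hpar2 : ¬ ∃ c : ℝ, V 2 - V 1 = c • (V 0 - V 3)) :
    ∃ w : Fin d → ℝ, IsLatticePt d w ∧
      w ∈ intrinsicInterior ℝ (convexHull ℝ (Set.range V)) ∧
      w ∉ Set.range V ∧
      ∃ i j l : Fin 4, i ≠ j ∧ i ≠ l ∧ j ≠ l ∧
        w ∈ intrinsicInterior ℝ (convexHull ℝ {V i, V j, V l}) := by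
  classical
  have hVQ : ∀ i, V i ∈ convexHull ℝ (Set.range V) :=
    fun i => subset_convexHull ℝ _ (mem_range_self i)
  have hseg : ∀ {x y z : Fin 4}, x ≠ y → x ≠ z → V x ∈ segment ℝ (V y) (V z) → False := by
    intro x y z hxy hxz hs
    have ho : V x ∈ openSegment ℝ (V y) (V z) :=
      mem_openSegment_of_ne_left_right (fun h => hxy (hVinj h.symm)) (fun h => hxz (hVinj h.symm)) hs
    have h2 := (mem_extremePoints.mp (hext x)).2 (V y) (hVQ y) (V z) (hVQ z) ho
    exact hxy (hVinj h2.1.symm)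
  have htriple : ∀ {x y z : Fin 4}, x ≠ y → x ≠ z → y ≠ z →
      ¬ Collinear ℝ ({V x, V y, V z} : Set (Fin d → ℝ)) := by
    intro x y z hxy hxz hyz hcol
    rcases hcol.wbtw_or_wbtw_or_wbtw with h | h | h
    · exact hseg hxy.symm hyz (mem_segment_iff_wbtw.mpr h)
    · exact hseg hyz.symm hxz.symm (mem_segment_iff_wbtw.mpr h)
    · exact hseg hxz hxy (mem_segment_iff_wbtw.mpr h)
  have hind012 : AffineIndependent ℝ ![V 0, V 1, V 2] :=
    affineIndependent_iff_not_collinear_set.mpr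
      (htriple (by decide) (by decide) (by decide))
  have hpair : ∀ x y : ℝ, x • (V 1 - V 0) + y • (V 2 - V 0) = 0 → x = 0 ∧ y = 0 := by
    intro x y hxy
    have h := affineIndependent_iff.mp hind012 Finset.univ ![-x-y, x, y]
      (by simp [Fin.sum_univ_three]; ring)
      (by
        rw [Fin.sum_univ_three]
        simp only [Matrix.cons_val_zero, Matrix.cons_val_one, Matrix.head_cons,
          Matrix.cons_val_two, Matrix.tail_cons]
        linear_combination (norm := module) hxy)
    exact ⟨by simpa using h 1 (Finset.mem_univ _), by simpa using h 2 (Finset.mem_univ _)⟩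
  -- dependency of the three difference vectors
  have hfr2 : finrank ℝ (vectorSpan ℝ (Set.range V)) ≤ 2 := hcop.finrank_le_two
  have hdep : ¬ LinearIndependent ℝ ![V 1 - V 0, V 2 - V 0, V 3 - V 0] := by
    intro hli
    have hsp : Submodule.span ℝ (Set.range ![V 1 - V 0, V 2 - V 0, V 3 - V 0])
        ≤ vectorSpan ℝ (Set.range V) := by
      rw [Submodule.span_le]
      rintro x ⟨k, rfl⟩
      fin_cases k <;> simp <;>
        exact
          vsub_mem_vectorSpan ℝ (Set.mem_range_self _) (Set.mem_range_self (0 : Fin 4))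
    have h3 := finrank_span_eq_card hli
    have h4 := Submodule.finrank_mono hsp
    rw [h3] at h4
    simp at h4
    omega
  obtain ⟨g, hg, i0, hgi⟩ := Fintype.not_linearIndependent_iff.mp hdep
  rw [Fin.sum_univ_three] at hg
  simp only [Matrix.cons_val_zero, Matrix.cons_val_one, Matrix.head_cons,
    Matrix.cons_val_two, Matrix.tail_cons] at hg
  have hg2 : g 2 ≠ 0 := by
    intro h2
    rw [h2, zero_smul, add_zero] at hg
    obtain ⟨e1, e2⟩ := hpair (g 0) (g 1) hg
    have hall : ∀ i, g i = 0 := by intro i; fin_cases i <;> assumption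
    exact hgi (hall i0)
  set cc : ℝ := -g 0 / g 2 with hccdef
  set bb : ℝ := -g 1 / g 2 with hbbdef
  have hu3 : V 3 - V 0 = cc • (V 1 - V 0) + bb • (V 2 - V 0) := by
    apply smul_right_injective (Fin d → ℝ) hg2
    have e0 : g 0 = -(g 2 * cc) := by rw [hccdef]; field_simp
    have e1 : g 1 = -(g 2 * bb) := by rw [hbbdef]; field_simp
    rw [e0, e1] at hg
    linear_combination (norm := module) hg
  have hV3 : V 3 = V 0 + (cc • (V 1 - V 0) + bb • (V 2 - V 0)) := by
    rw [← hu3]; abel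
  clear hccdef hbbdef
  clear_value cc bb
  -- the crossing point
  obtain ⟨pp, hp02, hp13⟩ := hcyc
  obtain ⟨a1, b1, ha1, hb1, hab1, hp1⟩ := hp02
  obtain ⟨a2, b2, ha2, hb2, hab2, hp2⟩ := hp13
  have ha1e : a1 = 1 - b1 := by linarith
  subst ha1e
  have ha2e : a2 = 1 - b2 := by linarith
  subst ha2e
  have hppne : ∀ (m y z : Fin 4), m ≠ y → m ≠ z →
      (∃ s t : ℝ, 0 ≤ s ∧ 0 ≤ t ∧ s + t = 1 ∧ s • V y + t • V z = pp) → pp ≠ V m := by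
    intro m y z hmy hmz hex heq
    exact hseg hmy hmz (heq ▸ hex)
  have hb1p : 0 < b1 := by
    rcases hb1.eq_or_lt with h | h
    · exfalso
      apply hppne 0 1 3 (by decide) (by decide) ⟨_, _, ha2, hb2, hab2, hp2⟩
      rw [← hp1, ← h]
      simp
    · exact h
  have ha1p : b1 < 1 := by
    rcases ha1.eq_or_lt with h | h
    · exfalso
      apply hppne 2 1 3 (by decide) (by decide) ⟨_, _, ha2, hb2, hab2, hp2⟩
      rw [← hp1, show (1:ℝ) - b1 = 0 by linarith, show b1 = (1:ℝ) by linarith]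
      simp
    · linarith
  have hb2p : 0 < b2 := by
    rcases hb2.eq_or_lt with h | h
    · exfalso
      apply hppne 1 0 2 (by decide) (by decide) ⟨_, _, ha1, hb1, hab1, hp1⟩
      rw [← hp2, ← h]
      simp
    · exact h
  have ha2p : b2 < 1 := by
    rcases ha2.eq_or_lt with h | h
    · exfalso
      apply hppne 3 0 2 (by decide) (by decide) ⟨_, _, ha1, hb1, hab1, hp1⟩
      rw [← hp2, show (1:ℝ) - b2 = 0 by linarith, show b2 = (1:ℝ) by linarith]
      simp
    · linarith
  have e1 : (1 - b1) • V 0 + b1 • V 2 = (1 - b2) • V 1 + b2 • V 3 := by rw [hp1, hp2]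
  rw [hV3] at e1
  obtain ⟨hc1, hc2⟩ := hpair ((1 - b2) + b2 * cc) (b2 * bb - b1)
    (by linear_combination (norm := module) -e1)
  have hccne : cc ≠ 0 := by nlinarith
  have hcc : cc < 0 := by nlinarith
  have hbb : 0 < bb := by nlinarith
  have haa : 0 < 1 - cc - bb := by nlinarith
  have hbne1 : bb ≠ 1 := by
    intro h
    apply hpar1
    refine ⟨1/cc, ?_⟩
    rw [hV3, h]
    match_scalars <;> field_simp <;> ring
  have hane : cc + bb ≠ 0 := by
    intro h
    apply hpar2
    refine ⟨-(1/bb), ?_⟩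
    have hbbne : bb ≠ 0 := hbb.ne'
    rw [hV3, show cc = -bb by linarith]
    match_scalars <;> field_simp <;> ring
  have latt : ∀ (x y z : Fin 4), IsLatticePt d (V x + V y - V z) := by
    intro x y z i
    refine ⟨v x i + v y i - v z i, ?_⟩
    simp only [Pi.add_apply, Pi.sub_apply, hV]
    push_cast
    ring
  have FIN : ∀ (i j l : Fin 4), i ≠ j → i ≠ l → j ≠ l →
      ∀ (ω : Fin 3 → ℝ), (∀ k, 0 < ω k) → (∑ k, ω k) = 1 →
      ∀ W : Fin d → ℝ, IsLatticePt d W → W = ∑ k, ω k • ![V i, V j, V l] k →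
      AffineIndependent ℝ ![V i, V j, V l] →
      (∃ w : Fin d → ℝ, IsLatticePt d w ∧
        w ∈ intrinsicInterior ℝ (convexHull ℝ (Set.range V)) ∧
        w ∉ Set.range V ∧
        ∃ i j l : Fin 4, i ≠ j ∧ i ≠ l ∧ j ≠ l ∧
          w ∈ intrinsicInterior ℝ (convexHull ℝ {V i, V j, V l})) := by
    intro i j l hij hil hjl ω hωpos hωsum W hlat hWc hTind
    set T : Fin 3 → (Fin d → ℝ) := ![V i, V j, V l] with hT
    have hrangeT : Set.range T ⊆ Set.range V := by
      rintro x ⟨k, rfl⟩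
      fin_cases k <;> exact Set.mem_range_self _
    have hTmem : ∀ k, T k ∈ convexHull ℝ (Set.range V) :=
      fun k => subset_convexHull ℝ _ (hrangeT ⟨k, rfl⟩)
    have hsetT : ({V i, V j, V l} : Set (Fin d → ℝ)) = Set.range T := by
      ext x
      simp only [hT, Matrix.range_cons, Matrix.range_empty, Set.union_assoc,
        Set.union_empty, Set.singleton_union, Set.mem_insert_iff, Set.mem_singleton_iff]
    have hintT : W ∈ intrinsicInterior ℝ (convexHull ℝ (Set.range T)) := by
      rw [hWc]; exact lemA T hTind ω hωpos hωsum
    have hfrT : finrank ℝ (vectorSpan ℝ (Set.range V))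
        ≤ finrank ℝ (vectorSpan ℝ (Set.range T)) := by
      rw [hTind.finrank_vectorSpan (show Fintype.card (Fin 3) = 2 + 1 by norm_num)]
      exact hfr2
    have hspan : affineSpan ℝ (Set.range T) = affineSpan ℝ (Set.range V) :=
      lemC hrangeT ⟨V i, 0, rfl⟩ hfrT
    have hintQ : W ∈ intrinsicInterior ℝ (convexHull ℝ (Set.range V)) :=
      lemB (convexHull_mono hrangeT)
        (by rw [affineSpan_convexHull, affineSpan_convexHull]; exact hspan) hintT
    have hnot : W ∉ Set.range V := by
      rintro ⟨m, hm⟩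
      have hxm : V m ∈ Set.extremePoints ℝ (convexHull ℝ (Set.range V)) := hext m
      rw [hm] at hxm
      have hT0 : T 0 = W := lemE _ (convex_convexHull ℝ _) hxm T hTmem ω hωpos hωsum hWc
      have hT1 : T 1 = W := by
        refine lemE _ (convex_convexHull ℝ _) hxm ![T 1, T 0, T 2]
          (fun k => by fin_cases k <;> [exact hTmem 1; exact hTmem 0; exact hTmem 2])
          ![ω 1, ω 0, ω 2]
          (fun k => by fin_cases k <;> [exact hωpos 1; exact hωpos 0; exact hωpos 2]) ?_ ?_
        · rw [Fin.sum_univ_three] at hωsum ⊢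
          simp only [Matrix.cons_val_zero, Matrix.cons_val_one, Matrix.head_cons,
            Matrix.cons_val_two, Matrix.tail_cons] at hωsum ⊢
          linarith
        · rw [hWc, Fin.sum_univ_three, Fin.sum_univ_three]
          simp only [Matrix.cons_val_zero, Matrix.cons_val_one, Matrix.head_cons,
            Matrix.cons_val_two, Matrix.tail_cons]
          abel
      apply hij
      apply hVinj
      calc V i = T 0 := rfl
        _ = W := hT0
        _ = T 1 := hT1.symm
        _ = V j := rfl
    exact ⟨W, hlat, hintQ, hnot, i, j, l, hij, hil, hjl, by rw [hsetT]; exact hintT⟩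
  have hAne : (1:ℝ) - cc - bb ≠ 0 := ne_of_gt haa
  have hccne' : -cc ≠ 0 := by simpa using hccne
  have hbbne : bb ≠ 0 := hbb.ne'
  rcases hbne1.lt_or_gt with hblt | hbgt
  · rcases hane.lt_or_gt with halt | hagt
    · -- bb < 1, cc + bb < 0 : triple (1,2,3)
      refine FIN 1 2 3 (by decide) (by decide) (by decide)
        ![(1-bb)/(1-cc-bb), bb/(1-cc-bb), (-cc-bb)/(1-cc-bb)] ?_ ?_
        (V 1 + V 3 - V 0) (latt 1 3 0) ?_ ?_
      · intro k
        fin_cases k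
        · exact div_pos (by linarith) haa
        · exact div_pos hbb haa
        · exact div_pos (by linarith) haa
      · rw [Fin.sum_univ_three]
        simp only [Matrix.cons_val_zero, Matrix.cons_val_one, Matrix.head_cons,
          Matrix.cons_val_two, Matrix.tail_cons]
        field_simp
        try ring
      · rw [Fin.sum_univ_three]
        simp only [Matrix.cons_val_zero, Matrix.cons_val_one, Matrix.head_cons,
          Matrix.cons_val_two, Matrix.tail_cons]
        rw [hV3]
        match_scalars <;> field_simp [hAne] <;> try ring
      · refine lemD hpair (V 1) (V 2) (V 3) (-1) 1 (cc-1) bb (by module) (by rw [hV3]; module) ?_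
        intro hz
        exact hAne (by linear_combination hz)
    · -- bb < 1, cc + bb > 0 : triple (0,1,2)
      refine FIN 0 1 2 (by decide) (by decide) (by decide)
        ![cc+bb, -cc, 1-bb] ?_ ?_ (V 0 + V 2 - V 3) (latt 0 2 3) ?_ hind012
      · intro k
        fin_cases k
        · exact hagt
        · simpa using hcc
        · simpa using hblt
      · rw [Fin.sum_univ_three]
        simp only [Matrix.cons_val_zero, Matrix.cons_val_one, Matrix.head_cons,
          Matrix.cons_val_two, Matrix.tail_cons]
        ring
      · rw [Fin.sum_univ_three]
        simp only [Matrix.cons_val_zero, Matrix.cons_val_one, Matrix.head_cons,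
          Matrix.cons_val_two, Matrix.tail_cons]
        rw [hV3]
        module
  · rcases hane.lt_or_gt with halt | hagt
    · -- bb > 1, cc + bb < 0 : triple (0,2,3)
      refine FIN 0 2 3 (by decide) (by decide) (by decide)
        ![(bb-1)/(-cc), (-cc-bb)/(-cc), 1/(-cc)] ?_ ?_
        (V 0 + V 2 - V 1) (latt 0 2 1) ?_ ?_
      · intro k
        fin_cases k
        · exact div_pos (by linarith) (by linarith)
        · exact div_pos (by linarith) (by linarith)
        · exact div_pos one_pos (by linarith)
      · rw [Fin.sum_univ_three]
        simp only [Matrix.cons_val_zero, Matrix.cons_val_one, Matrix.head_cons,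
          Matrix.cons_val_two, Matrix.tail_cons]
        field_simp
        try ring
      · rw [Fin.sum_univ_three]
        simp only [Matrix.cons_val_zero, Matrix.cons_val_one, Matrix.head_cons,
          Matrix.cons_val_two, Matrix.tail_cons]
        rw [hV3]
        match_scalars <;> field_simp [hccne'] <;> try ring
      · refine lemD hpair (V 0) (V 2) (V 3) 0 1 cc bb (by module) (by rw [hV3]; module) ?_
        intro hz
        exact hccne (by linear_combination -hz)
    · -- bb > 1, cc + bb > 0 : triple (0,1,3)
      refine FIN 0 1 3 (by decide) (by decide) (by decide)
        ![(1-cc-bb)/bb, (cc+bb)/bb, (bb-1)/bb] ?_ ?_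
        (V 1 + V 3 - V 2) (latt 1 3 2) ?_ ?_
      · intro k
        fin_cases k
        · exact div_pos haa hbb
        · exact div_pos hagt hbb
        · exact div_pos (by linarith) hbb
      · rw [Fin.sum_univ_three]
        simp only [Matrix.cons_val_zero, Matrix.cons_val_one, Matrix.head_cons,
          Matrix.cons_val_two, Matrix.tail_cons]
        field_simp
        try ring
      · rw [Fin.sum_univ_three]
        simp only [Matrix.cons_val_zero, Matrix.cons_val_one, Matrix.head_cons,
          Matrix.cons_val_two, Matrix.tail_cons]
        rw [hV3]
        match_scalars <;> field_simp [hbbne] <;> try ring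
      · refine lemD hpair (V 0) (V 1) (V 3) 1 0 cc bb (by module) (by rw [hV3]; module) ?_
        intro hz
        exact hbbne (by linear_combination hz)
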